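/- For θ₁ ∈ ℝ and θ₂ ≠ 0, let g_d(θ₁,θ₂) be the 4×4 block-diagonal matrix diag(H(θ₁,θ₂), h(θ₁,θ₂)) and let J_d(θ₁,θ₂) be the 4×4 matrix whose diagonal 2×2 blocks are zero, whose top-right 2×2 block is -h(θ₁,θ₂), and whose bottom-left 2×2 block is H(θ₁,θ₂). Then J_d(θ₁,θ₂)² = -I₄ and J_d(θ₁,θ₂)ᵀ·g_d(θ₁,θ₂)·J_d(θ₁,θ₂) = g_d(θ₁,θ₂). -/
import Mathlib


open Matrix

/-- In the mixed coordinates `(η₁,η₂,θ̇₁,θ̇₂)`, the Kähler structure of the tangent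
bundle of the lognormal manifold satisfies `J_d² = -I` and `J_dᵀ g_d J_d = g_d`, where
`g_d = diag(H, h)` and `J_d` has blocks `-h` (top right) and `H` (bottom left). -/
theorem lognormal_kahler_structure_eta_coords
    (θ₁ θ₂ : ℝ) (hθ₂ : θ₂ ≠ 0)
    (h H : Matrix (Fin 2) (Fin 2) ℝ)
    (hh : h = !![-1 / (2 * θ₂), θ₁ / (2 * θ₂ ^ 2);
                 θ₁ / (2 * θ₂ ^ 2), -(θ₁ ^ 2 - θ₂) / (2 * θ₂ ^ 3)])
    (hH : H = !![2 * θ₁ ^ 2 - 2 * θ₂, 2 * θ₁ * θ₂;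
                 2 * θ₁ * θ₂, 2 * θ₂ ^ 2])
    (gd Jd : Matrix (Fin 2 ⊕ Fin 2) (Fin 2 ⊕ Fin 2) ℝ)
    (hgd : gd = Matrix.fromBlocks H 0 0 h)
    (hJd : Jd = Matrix.fromBlocks 0 (-h) H 0) :
    Jd * Jd = -1 ∧ Jdᵀ * gd * Jd = gd := by
  have hhH : h * H = 1 := by
    subst hh hH
    ext i j
    fin_cases i <;> fin_cases j <;>
      simp [Matrix.mul_apply, Fin.sum_univ_two, Matrix.one_apply] <;>
      field_simp <;> ring
  have hHh : H * h = 1 := by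
    subst hh hH
    ext i j
    fin_cases i <;> fin_cases j <;>
      simp [Matrix.mul_apply, Fin.sum_univ_two, Matrix.one_apply] <;>
      field_simp <;> ring
  have hsym : hᵀ = h := by subst hh; ext i j; fin_cases i <;> fin_cases j <;> simp
  have Hsym : Hᵀ = H := by subst hH; ext i j; fin_cases i <;> fin_cases j <;> simp
  subst hgd hJd
  constructor
  · rw [Matrix.fromBlocks_multiply]
    simp [hhH, hHh]
    ext i j
    rcases i with i | i <;> rcases j with j | j <;>
      simp [Matrix.fromBlocks, Matrix.one_apply, Sum.inl.injEq, Sum.inr.injEq]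
  · rw [Matrix.fromBlocks_transpose, Matrix.fromBlocks_multiply,
      Matrix.fromBlocks_multiply]
    simp [hsym, Hsym, Matrix.transpose_neg, ← Matrix.mul_assoc, hHh, hhH,
      Matrix.mul_assoc, hhH]
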